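/- arXiv:1411.6692 — 2 statements merged into one kernel-verified Lean document; each statement's English description precedes it below -/
import Mathlib

section
/- Let L be a split δ Jordan-Lie algebra with symmetric root system Λ, α ∈ Λ, and γ ∈ Λ with γ ∉ Λ_α. Then [L_β, L_γ] = 0 for every β ∈ Λ_α. -/
/-- A δ Jordan-Lie algebra: a vector space with a bilinear bracket satisfying
`[x,y] = -δ[y,x]` and `[x,[y,z]] = δ[[x,y],z] + δ[y,[x,z]]` with `δ = ±1`. -/
structure DeltaJordanLie (K L : Type*) [Field K] [AddCommGroup L] [Module K L] where
  br : L →ₗ[K] L →ₗ[K] L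
  delta : K
  delta_pm : delta = 1 ∨ delta = -1
  anti : ∀ x y : L, br x y = -(delta • br y x)
  jacobi : ∀ x y z : L, br x (br y z) = delta • br (br x y) z + delta • br y (br x z)

variable {K L : Type*} [Field K] [AddCommGroup L] [Module K L]

/-- The root space `L_α = {v ∈ L : [h,v] = α(h)v for all h ∈ H}`. -/
def DeltaJordanLie.rootSpace (J : DeltaJordanLie K L) (H : Submodule K L)
    (α : Module.Dual K H) : Submodule K L where
  carrier := {v : L | ∀ h : H, J.br (h : L) v = α h • v}
  zero_mem' := by intro h; simp
  add_mem' := by intro a b ha hb h; simp [ha h, hb h, smul_add]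
  smul_mem' := by intro c a ha h; rw [map_smul, ha h, smul_comm]

/-- The root system `Λ = {α ∈ H* \ {0} : L_α ≠ 0}`. -/
def DeltaJordanLie.roots (J : DeltaJordanLie K L) (H : Submodule K L) :
    Set (Module.Dual K H) :=
  {α | α ≠ 0 ∧ J.rootSpace H α ≠ ⊥}

/-- `H` is a splitting Cartan subalgebra: a maximal abelian subalgebra such that
`L` decomposes as the direct sum of the simultaneous eigenspaces `L_α`, with `L_0 = H`. -/
structure DeltaJordanLie.IsSplitting (J : DeltaJordanLie K L) (H : Submodule K L) : Prop where
  abelian : ∀ x ∈ H, ∀ y ∈ H, J.br x y = 0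
  maximal : ∀ H' : Submodule K L, H ≤ H' →
      (∀ x ∈ H', ∀ y ∈ H', J.br x y = 0) → H' = H
  zero_rootSpace : J.rootSpace H 0 = H
  indep : iSupIndep (fun α : Module.Dual K H => J.rootSpace H α)
  decomp : (⨆ α : Module.Dual K H, J.rootSpace H α) = ⊤

/-- The root system is symmetric. -/
def DeltaJordanLie.SymmetricRoots (J : DeltaJordanLie K L) (H : Submodule K L) : Prop :=
  ∀ α ∈ J.roots H, -α ∈ J.roots H

/-- The δ-twisted partial sums of a sequence of roots:
`s₀ = f 0`, `s_{k+1} = δ • (s_k + f (k+1))`, so that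
`s_k = δ^k f 0 + δ^k f 1 + δ^{k-1} f 2 + ⋯ + δ f k`. -/
def connSum {H : Submodule K L} (d : K) (f : ℕ → Module.Dual K H) : ℕ → Module.Dual K H
  | 0 => f 0
  | k + 1 => d • (connSum d f k + f (k + 1))

/-- `f 0, …, f n` is a connection from `α` to `β`: all terms are roots, `f 0 = α`,
all proper δ-twisted partial sums are roots, and the final sum is `±β`. -/
def IsConnection (J : DeltaJordanLie K L) (H : Submodule K L)
    (α β : Module.Dual K H) (n : ℕ) (f : ℕ → Module.Dual K H) : Prop :=
  (∀ i ≤ n, f i ∈ J.roots H) ∧ f 0 = α ∧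
  (∀ k < n, connSum J.delta f k ∈ J.roots H) ∧
  (connSum J.delta f n = β ∨ connSum J.delta f n = -β)

/-- `α` and `β` are connected. -/
def Connected (J : DeltaJordanLie K L) (H : Submodule K L)
    (α β : Module.Dual K H) : Prop :=
  ∃ n f, IsConnection J H α β n f

/-- `Λ_α`: the set of nonzero roots connected to `α`. -/
def connectedRoots (J : DeltaJordanLie K L) (H : Submodule K L)
    (α : Module.Dual K H) : Set (Module.Dual K H) :=
  {β ∈ J.roots H | Connected J H α β}

/-- An ideal of a δ Jordan-Lie algebra: a submodule with `[I,L] ⊆ I` and `[L,I] ⊆ I`. -/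
def IsIdeal (J : DeltaJordanLie K L) (I : Submodule K L) : Prop :=
  ∀ x ∈ I, ∀ y : L, J.br x y ∈ I ∧ J.br y x ∈ I

/-- `H_S = span{[L_β, L_{-β}] : β ∈ S}`. -/
def rootSpan (J : DeltaJordanLie K L) (H : Submodule K L)
    (S : Set (Module.Dual K H)) : Submodule K L :=
  Submodule.span K {z : L | ∃ β ∈ S, ∃ x ∈ J.rootSpace H β, ∃ y ∈ J.rootSpace H (-β),
    z = J.br x y}

/-- `L_S = H_S ⊕ V_S`, the subalgebra associated to a set of roots `S`. -/
def decIdeal (J : DeltaJordanLie K L) (H : Submodule K L)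
    (S : Set (Module.Dual K H)) : Submodule K L :=
  rootSpan J H S ⊔ ⨆ β ∈ S, J.rootSpace H β

lemma connSum_congr {H : Submodule K L} (d : K) {f g : ℕ → Module.Dual K H} :
    ∀ k, (∀ i ≤ k, f i = g i) → connSum d f k = connSum d g k
  | 0, h => by simpa [connSum] using h 0 le_rfl
  | k + 1, h => by
      rw [connSum, connSum, connSum_congr d k (fun i hi => h i (hi.trans (Nat.le_succ k))),
        h (k + 1) le_rfl]

/-- Extend a connection from `α` ending exactly at `β` by `γ` and `-δ•β` to get a
connection from `α` ending exactly at `γ`. -/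
lemma extend_conn (J : DeltaJordanLie K L) (H : Submodule K L)
    (hsym : J.SymmetricRoots H) (α β γ : Module.Dual K H) (n : ℕ) (f : ℕ → Module.Dual K H)
    (hfr : ∀ i ≤ n, f i ∈ J.roots H) (hf0 : f 0 = α)
    (hfp : ∀ k < n, connSum J.delta f k ∈ J.roots H)
    (hfe : connSum J.delta f n = β)
    (hβ : β ∈ J.roots H) (hγ : γ ∈ J.roots H)
    (hμ : J.delta • (β + γ) ∈ J.roots H) :
    ∃ m g, (∀ i ≤ m, g i ∈ J.roots H) ∧ g 0 = α ∧
      (∀ k < m, connSum J.delta g k ∈ J.roots H) ∧ connSum J.delta g m = γ := by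
  set d := J.delta with hd
  have hd2 : d * d = 1 := by rcases J.delta_pm with h | h <;> simp [hd, h]
  have hdβ : d • β ∈ J.roots H := by
    rcases J.delta_pm with h | h
    · simpa [hd, h] using hβ
    · have h2 := hsym β hβ
      rw [← neg_one_smul K β] at h2
      rw [hd, h]; exact h2
  set g : ℕ → Module.Dual K H := fun i =>
    if i ≤ n then f i else if i = n + 1 then γ else -(d • β) with hg
  have hgf : ∀ i ≤ n, f i = g i := fun i hi => by simp [hg, hi]
  have hgn : connSum d g n = β := by rw [← connSum_congr d n hgf, hfe]
  have hg1 : g (n + 1) = γ := by simp [hg]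
  have hg2 : g (n + 2) = -(d • β) := by
    simp only [hg]
    rw [if_neg (by omega), if_neg (by omega)]
  have hs1 : connSum d g (n + 1) = d • (β + γ) := by
    rw [connSum, hgn, hg1]
  have hs2 : connSum d g (n + 2) = γ := by
    show connSum d g (n + 1 + 1) = γ
    rw [connSum, hs1, hg2, smul_add, smul_neg, smul_smul, smul_smul, hd2, one_smul, one_smul]
    abel
  refine ⟨n + 2, g, ?_, by rw [← hgf 0 (Nat.zero_le n), hf0], ?_, hs2⟩
  · intro i hi
    rcases le_or_gt i n with h | h
    · rw [← hgf i h]; exact hfr i h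
    · rcases (by omega : i = n + 1 ∨ i = n + 2) with h | h
      · rw [h, hg1]; exact hγ
      · rw [h, hg2]; exact hsym _ hdβ
  · intro k hk
    rcases lt_or_ge k n with h | h
    · rw [← connSum_congr d k (fun i hi => hgf i (hi.trans h.le))]
      exact hfp k h
    · rcases (by omega : k = n ∨ k = n + 1) with h | h
      · rw [h, hgn]; exact hβ
      · rw [h, hs1]; exact hμ

/-- if `γ ∈ Λ` is not connected to `α`, then `[L_β, L_γ] = 0` for every
`β ∈ Λ_α`. -/
theorem stmt5 (J : DeltaJordanLie K L) (H : Submodule K L) (hs : J.IsSplitting H)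
    (hsym : J.SymmetricRoots H) (α γ : Module.Dual K H)
    (hα : α ∈ J.roots H) (hγ : γ ∈ J.roots H) (hγn : γ ∉ connectedRoots J H α) :
    ∀ β ∈ connectedRoots J H α, ∀ x ∈ J.rootSpace H β, ∀ y ∈ J.rootSpace H γ,
      J.br x y = 0 := by
  intro β hβ x hx y hy
  by_contra hne
  obtain ⟨hβr, nn, f, hfr, hf0, hfp, hfe⟩ := hβ
  set d := J.delta with hd
  have hd0 : d ≠ 0 := by
    rcases J.delta_pm with h | h <;> simp [hd, h]
  have hbr : J.br x y ∈ J.rootSpace H (d • (β + γ)) := by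
    intro h
    have hj := J.jacobi (h : L) x y
    rw [hx h, hy h] at hj
    rw [hj, hd]
    simp only [LinearMap.add_apply, LinearMap.smul_apply, map_smul, smul_eq_mul]
    module
  apply hγn
  refine ⟨hγ, ?_⟩
  by_cases h0 : β + γ = 0
  · have hγβ : γ = -β := by
      rw [eq_neg_iff_add_eq_zero, add_comm]; exact h0
    refine ⟨nn, f, hfr, hf0, hfp, ?_⟩
    rcases hfe with h | h
    · exact Or.inr (by rw [h, hγβ, neg_neg])
    · exact Or.inl (by rw [h, hγβ])
  · have hμ : d • (β + γ) ∈ J.roots H := by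
      refine ⟨smul_ne_zero hd0 h0, ?_⟩
      exact (Submodule.ne_bot_iff _).2 ⟨J.br x y, hbr, hne⟩
    rcases hfe with h | h
    · obtain ⟨m, g, h1, h2, h3, h4⟩ :=
        extend_conn J H hsym α β γ nn f hfr hf0 hfp h hβr hγ hμ
      exact ⟨m, g, h1, h2, h3, Or.inl h4⟩
    · have hμ' : d • (-β + -γ) ∈ J.roots H := by
        have : d • (-β + -γ) = -(d • (β + γ)) := by
          rw [show (-β + -γ : Module.Dual K ↥H) = -(β + γ) by abel, smul_neg]
        rw [this]; exact hsym _ hμ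
      obtain ⟨m, g, h1, h2, h3, h4⟩ :=
        extend_conn J H hsym α (-β) (-γ) nn f hfr hf0 hfp h (hsym β hβr) (hsym γ hγ) hμ'
      exact ⟨m, g, h1, h2, h3, Or.inr h4⟩
end

section
/- Let L be a split δ Jordan-Lie algebra with symmetric root system Λ, with trivial center Z(L) = 0 and satisfying [L,L] = L. Then L is the direct sum L = ⊕_{[α]∈Λ/~} I_{[α]} of the ideals I_{[α]} associated to the connection equivalence classes. -/
variable {K L : Type*} [Field K] [AddCommGroup L] [Module K L]

section Aux

variable (J : DeltaJordanLie K L) (H : Submodule K L)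

lemma delta_mul_self (J : DeltaJordanLie K L) : J.delta * J.delta = 1 := by
  rcases J.delta_pm with h | h <;> rw [h] <;> ring

lemma delta_ne_zero (J : DeltaJordanLie K L) : J.delta ≠ 0 := by
  rcases J.delta_pm with h | h <;> rw [h] <;> norm_num

lemma br_rootSpace {α β : Module.Dual K H} {x y : L}
    (hx : x ∈ J.rootSpace H α) (hy : y ∈ J.rootSpace H β) :
    J.br x y ∈ J.rootSpace H (J.delta • (α + β)) := by
  intro h
  rw [J.jacobi (h : L) x y, hx h, hy h, map_smul, LinearMap.smul_apply]
  simp only [LinearMap.smul_apply, LinearMap.add_apply, smul_eq_mul, map_smul,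
    smul_smul]
  rw [← add_smul]
  ring_nf

lemma rootSpace_eq_bot {α : Module.Dual K H} (h0 : α ≠ 0) (hr : α ∉ J.roots H) :
    J.rootSpace H α = ⊥ := by
  by_contra hb
  exact hr ⟨h0, hb⟩

lemma roots_smul_pm (hsym : J.SymmetricRoots H) {c : K} (hc : c = 1 ∨ c = -1)
    {α : Module.Dual K H} (hα : α ∈ J.roots H) : c • α ∈ J.roots H := by
  rcases hc with rfl | rfl
  · simpa using hα
  · have h := hsym α hα
    rwa [← neg_one_smul K α] at h

lemma connected_refl {α : Module.Dual K H} (hα : α ∈ J.roots H) : Connected J H α α :=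
  ⟨0, fun _ => α, fun _ _ => hα, rfl, fun k hk => absurd hk (Nat.not_lt_zero k), Or.inl rfl⟩

lemma connected_neg_self {α : Module.Dual K H} (hα : α ∈ J.roots H) :
    Connected J H α (-α) :=
  ⟨0, fun _ => α, fun _ _ => hα, rfl, fun k hk => absurd hk (Nat.not_lt_zero k),
    Or.inr (neg_neg α).symm⟩

lemma connected_step {ε γ : Module.Dual K H} (hε : ε ∈ J.roots H) (hγ : γ ∈ J.roots H)
    (hρ : J.delta • (ε + γ) ∈ J.roots H) :
    Connected J H ε (J.delta • (ε + γ)) := by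
  refine ⟨1, fun i => if i = 0 then ε else γ, ?_, rfl, ?_, Or.inl ?_⟩
  · intro i _
    by_cases h : i = 0 <;> simp [h, hε, hγ]
  · intro k hk
    interval_cases k
    simpa [connSum] using hε
  · simp [connSum]

lemma connected_symm (hsym : J.SymmetricRoots H) {α β : Module.Dual K H}
    (hβ : β ∈ J.roots H) (h : Connected J H α β) : Connected J H β α := by
  obtain ⟨n, f, h1, h2, h3, h4⟩ := h
  obtain ⟨c, hc, hcb⟩ : ∃ c : K, (c = 1 ∨ c = -1) ∧ connSum J.delta f n = c • β := by
    rcases h4 with h4 | h4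
    · exact ⟨1, Or.inl rfl, by rw [h4, one_smul]⟩
    · exact ⟨-1, Or.inr rfl, h4.trans (neg_one_smul K β).symm⟩
  have hcc : c * c = 1 := by rcases hc with rfl | rfl <;> norm_num
  set g : ℕ → Module.Dual K H := fun i =>
    match i with
    | 0 => β
    | k + 1 => (-(J.delta * c)) • f (n - k) with hg
  have hgs : ∀ k ≤ n, connSum J.delta g k = c • connSum J.delta f (n - k) := by
    intro k hk
    induction k with
    | zero =>
      show β = c • connSum J.delta f (n - 0)
      rw [Nat.sub_zero, hcb, smul_smul, hcc, one_smul]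
    | succ k ih =>
      have hkn : k ≤ n := Nat.le_of_succ_le hk
      have hsub : n - k = (n - (k + 1)) + 1 := by omega
      have hrec : connSum J.delta f (n - k)
          = J.delta • (connSum J.delta f (n - (k+1)) + f (n - k)) := by
        rw [hsub]; rfl
      have : connSum J.delta g (k + 1)
          = J.delta • (c • connSum J.delta f (n - k) + (-(J.delta * c)) • f (n - k)) := by
        rw [show connSum J.delta g (k+1) = J.delta • (connSum J.delta g k + g (k+1)) from rfl,
          ih hkn]
      rw [this, hrec]
      simp only [smul_add, smul_smul]
      have hd : J.delta * J.delta = 1 := delta_mul_self J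
      rw [show J.delta * (c * J.delta) = c by
            rw [show J.delta * (c * J.delta) = c * (J.delta * J.delta) by ring, hd, mul_one],
        show J.delta * -(J.delta * c) = -c by
            rw [show J.delta * -(J.delta * c) = -(J.delta * J.delta * c) by ring, hd, one_mul]]
      rw [neg_smul, add_neg_cancel_right]
  have hcroots : ∀ i ≤ n, g i ∈ J.roots H := by
    intro i hi
    match i with
    | 0 => exact hβ
    | k + 1 =>
      have : n - k ≤ n := Nat.sub_le _ _
      refine roots_smul_pm J H hsym ?_ (h1 _ this)
      rcases J.delta_pm with h | h <;> rcases hc with h' | h' <;>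
        rw [h, h'] <;> [right; left; left; right] <;> norm_num
  refine ⟨n, g, hcroots, rfl, ?_, ?_⟩
  · intro k hk
    rw [hgs k (Nat.le_of_lt hk)]
    refine roots_smul_pm J H hsym hc ?_
    rcases Nat.eq_or_lt_of_le (Nat.sub_le n k) with heq | hlt
    · rw [heq, hcb]
      exact roots_smul_pm J H hsym hc hβ
    · exact h3 _ hlt
  · rw [hgs n le_rfl, Nat.sub_self]
    show c • f 0 = α ∨ c • f 0 = -α
    rcases hc with rfl | rfl
    · exact Or.inl (by rw [one_smul, h2])
    · exact Or.inr ((neg_one_smul K (f 0)).trans (by rw [h2]))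

lemma connected_trans (hsym : J.SymmetricRoots H) {α β γ : Module.Dual K H}
    (h1 : Connected J H α β) (h2 : Connected J H β γ) : Connected J H α γ := by
  obtain ⟨n, f, hf1, hf2, hf3, hf4⟩ := h1
  obtain ⟨m, g, hg1, hg2, hg3, hg4⟩ := h2
  obtain ⟨c, hc, hcb⟩ : ∃ c : K, (c = 1 ∨ c = -1) ∧ connSum J.delta f n = c • β := by
    rcases hf4 with h4 | h4
    · exact ⟨1, Or.inl rfl, by rw [h4, one_smul]⟩
    · exact ⟨-1, Or.inr rfl, h4.trans (neg_one_smul K β).symm⟩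
  set h : ℕ → Module.Dual K H := fun i => if i ≤ n then f i else c • g (i - n) with hh
  have hlow : ∀ k ≤ n, connSum J.delta h k = connSum J.delta f k := by
    intro k hk
    induction k with
    | zero => simp [connSum, hh]
    | succ k ih =>
      show J.delta • (connSum J.delta h k + h (k+1)) = J.delta • (connSum J.delta f k + f (k+1))
      rw [ih (Nat.le_of_succ_le hk), hh]
      simp [hk]
  have hhigh : ∀ k, connSum J.delta h (n + k) = c • connSum J.delta g k := by
    intro k
    induction k with
    | zero =>
      rw [Nat.add_zero, hlow n le_rfl, hcb]
      show c • β = c • g 0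
      rw [hg2]
    | succ k ih =>
      show J.delta • (connSum J.delta h (n+k) + h (n+k+1)) = _
      have : h (n+k+1) = c • g (k+1) := by
        rw [hh]; simp only []
        rw [if_neg (by omega), show n + k + 1 - n = k + 1 by omega]
      rw [this, ih]
      show J.delta • (c • connSum J.delta g k + c • g (k+1))
          = c • (J.delta • (connSum J.delta g k + g (k+1)))
      simp only [smul_add, smul_smul, mul_comm J.delta c]
  refine ⟨n + m, h, ?_, ?_, ?_, ?_⟩
  · intro i hi
    rw [hh]; simp only []
    by_cases hin : i ≤ n
    · rw [if_pos hin]; exact hf1 i hin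
    · rw [if_neg hin]
      exact roots_smul_pm J H hsym hc (hg1 _ (by omega))
  · rw [hh]; simp only []; rw [if_pos (Nat.zero_le n)]; exact hf2
  · intro k hk
    by_cases hkn : k ≤ n
    · rcases Nat.eq_or_lt_of_le hkn with rfl | hlt
      · rw [hlow k le_rfl, hcb]
        exact roots_smul_pm J H hsym hc (hg2 ▸ hg1 0 (Nat.zero_le m))
      · rw [hlow k (Nat.le_of_lt hlt)]; exact hf3 k hlt
    · obtain ⟨j, rfl⟩ : ∃ j, k = n + j := ⟨k - n, by omega⟩
      rw [hhigh j]
      exact roots_smul_pm J H hsym hc (hg3 j (by omega))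
  · rw [hhigh m]
    rcases hg4 with h4 | h4 <;> rw [h4] <;> rcases hc with rfl | rfl
    · exact Or.inl (one_smul _ _)
    · exact Or.inr (neg_one_smul K γ)
    · exact Or.inr (by rw [one_smul])
    · exact Or.inl ((neg_one_smul K (-γ)).trans (neg_neg γ))

/-- If `ε ≁ γ` (both roots), then `[L_ε, L_γ] = 0`. -/
lemma br_eq_zero_of_not_connected (hs : J.IsSplitting H) (hsym : J.SymmetricRoots H)
    {ε γ : Module.Dual K H} (hε : ε ∈ J.roots H) (hγ : γ ∈ J.roots H)
    (hnc : ¬ Connected J H ε γ) {x v : L}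
    (hx : x ∈ J.rootSpace H ε) (hv : v ∈ J.rootSpace H γ) :
    J.br x v = 0 := by
  have hmem := br_rootSpace J H hx hv
  by_cases h0 : J.delta • (ε + γ) = 0
  · exfalso
    have hsum : ε + γ = 0 := by
      rcases smul_eq_zero.mp h0 with h | h
      · exact absurd h (delta_ne_zero J)
      · exact h
    have : γ = -ε := by
      rw [eq_neg_iff_add_eq_zero, add_comm]
      exact hsum
    exact hnc (this ▸ connected_neg_self J H hε)
  · by_cases hr : J.delta • (ε + γ) ∈ J.roots H
    · exfalso
      have h1 : Connected J H ε (J.delta • (ε + γ)) := connected_step J H hε hγ hr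
      have hr' : J.delta • (γ + ε) ∈ J.roots H := by rwa [add_comm γ ε]
      have h2 : Connected J H γ (J.delta • (γ + ε)) := connected_step J H hγ hε hr'
      have h3 := connected_symm J H hsym hr' h2
      rw [add_comm γ ε] at h3
      exact hnc (connected_trans J H hsym h1 h3)
    · rw [rootSpace_eq_bot J H h0 hr] at hmem
      exact hmem

/-- If `ε ≁ γ` (both roots), then `[[L_ε, L_{-ε}], L_γ] = 0`. -/
lemma br_br_eq_zero (hs : J.IsSplitting H) (hsym : J.SymmetricRoots H)
    {ε γ : Module.Dual K H} (hε : ε ∈ J.roots H) (hγ : γ ∈ J.roots H)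
    (hnc : ¬ Connected J H ε γ) {e f v : L}
    (he : e ∈ J.rootSpace H ε) (hf : f ∈ J.rootSpace H (-ε)) (hv : v ∈ J.rootSpace H γ) :
    J.br (J.br e f) v = 0 := by
  have hev : J.br e v = 0 := br_eq_zero_of_not_connected J H hs hsym hε hγ hnc he hv
  have hfv : J.br f v = 0 := by
    refine br_eq_zero_of_not_connected J H hs hsym (hsym ε hε) hγ ?_ hf hv
    intro h
    exact hnc (connected_trans J H hsym (connected_neg_self J H hε) h)
  have hj := J.jacobi e f v
  rw [hfv, hev, map_zero, map_zero, smul_zero, add_zero] at hj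
  have := hj.symm
  rcases smul_eq_zero.mp this with h | h
  · exact absurd h (delta_ne_zero J)
  · exact h

lemma rootSpan_le_H (hs : J.IsSplitting H) (S : Set (Module.Dual K H)) :
    rootSpan J H S ≤ H := by
  refine Submodule.span_le.mpr ?_
  rintro z ⟨β, hβ, x, hx, y, hy, rfl⟩
  have hmem := br_rootSpace J H hx hy
  rw [show J.delta • (β + -β) = 0 by simp, hs.zero_rootSpace] at hmem
  exact hmem

lemma biSup_inf_biSup_le {ι : Type*} {V : ι → Submodule K L} (hV : iSupIndep V)
    (s t : Set ι) : (⨆ i ∈ s, V i) ⊓ (⨆ i ∈ t, V i) ≤ ⨆ i ∈ s ∩ t, V i := by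
  classical
  intro x hx
  obtain ⟨hx1, hx2⟩ := Submodule.mem_inf.mp hx
  obtain ⟨f, hf⟩ := (Submodule.mem_biSup_iff_exists_dfinsupp (· ∈ s) V x).mp hx1
  obtain ⟨g, hg⟩ := (Submodule.mem_biSup_iff_exists_dfinsupp (· ∈ t) V x).mp hx2
  have heq : DFinsupp.filter (· ∈ s) f = DFinsupp.filter (· ∈ t) g :=
    hV.dfinsupp_lsum_injective (hf.trans hg.symm)
  rw [← hf, DFinsupp.lsum_apply_apply, DFinsupp.sumAddHom_apply]
  refine Submodule.sum_mem _ ?_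
  intro i hi
  have hi0 : (DFinsupp.filter (· ∈ s) f) i ≠ 0 := DFinsupp.mem_support_iff.mp hi
  have his : i ∈ s := by
    by_contra h
    exact hi0 (by simp [DFinsupp.filter_apply, h])
  have hit : i ∈ t := by
    by_contra h
    rw [heq] at hi0
    exact hi0 (by simp [DFinsupp.filter_apply, h])
  exact Submodule.mem_iSup_of_mem i (Submodule.mem_iSup_of_mem ⟨his, hit⟩
    (((DFinsupp.filter (· ∈ s) f) i).2))

end Aux

/-- if `Z(L) = 0` and `[L,L] = L` then `L` is the direct sum of the
ideals `I_{[α]}` associated to the connection classes. -/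
theorem stmt10 (J : DeltaJordanLie K L) (H : Submodule K L) (hs : J.IsSplitting H)
    (hsym : J.SymmetricRoots H)
    (hZ : ∀ v : L, (∀ w : L, J.br v w = 0) → v = 0)
    (hLL : Submodule.span K {z : L | ∃ x y : L, z = J.br x y} = ⊤) :
    (⨆ α ∈ J.roots H, decIdeal J H (connectedRoots J H α)) = ⊤ ∧
    ∀ α ∈ J.roots H,
      decIdeal J H (connectedRoots J H α) ⊓
        (⨆ β ∈ J.roots H, ⨆ _ : ¬ Connected J H α β,
          decIdeal J H (connectedRoots J H β)) = ⊥ := by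
  classical
  set M := ⨆ α ∈ J.roots H, decIdeal J H (connectedRoots J H α) with hM
  -- brackets of root vectors land in M
  have key : ∀ γ γ' : Module.Dual K H, ∀ u ∈ J.rootSpace H γ, ∀ v ∈ J.rootSpace H γ',
      J.br u v ∈ M := by
    intro γ γ' u hu v hv
    have hmem := br_rootSpace J H hu hv
    by_cases h0 : J.delta • (γ + γ') = 0
    · have hsum : γ + γ' = 0 := by
        rcases smul_eq_zero.mp h0 with h | h
        · exact absurd h (delta_ne_zero J)
        · exact h
      have hγ' : γ' = -γ := by rw [eq_neg_iff_add_eq_zero, add_comm]; exact hsum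
      subst hγ'
      by_cases hγr : γ ∈ J.roots H
      · have hgen : J.br u v ∈ rootSpan J H (connectedRoots J H γ) :=
          Submodule.subset_span ⟨γ, ⟨hγr, connected_refl J H hγr⟩, u, hu, v, hv, rfl⟩
        have h1 : rootSpan J H (connectedRoots J H γ) ≤ decIdeal J H (connectedRoots J H γ) :=
          le_sup_left
        have h2 : decIdeal J H (connectedRoots J H γ) ≤ M := by
          rw [hM]
          exact le_iSup₂ (f := fun (α : Module.Dual K H) (_ : α ∈ J.roots H) => decIdeal J H (connectedRoots J H α)) γ hγr
        exact h2 (h1 hgen)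
      · by_cases hγ0 : γ = 0
        · subst hγ0
          rw [hs.zero_rootSpace] at hu
          rw [neg_zero, hs.zero_rootSpace] at hv
          rw [hs.abelian u hu v hv]
          exact Submodule.zero_mem _
        · have : u = 0 := by
            have := rootSpace_eq_bot J H hγ0 hγr ▸ hu
            simpa using this
          rw [this, map_zero, LinearMap.zero_apply]
          exact Submodule.zero_mem _
    · by_cases hρr : J.delta • (γ + γ') ∈ J.roots H
      · have h1 : J.rootSpace H (J.delta • (γ + γ')) ≤
            decIdeal J H (connectedRoots J H (J.delta • (γ + γ'))) := by
          refine le_trans ?_ le_sup_right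
          exact le_iSup₂ (f := fun (β : Module.Dual K H) (_ : β ∈ connectedRoots J H (J.delta • (γ + γ'))) => J.rootSpace H β) _ ⟨hρr, connected_refl J H hρr⟩
        have h2 : decIdeal J H (connectedRoots J H (J.delta • (γ + γ'))) ≤ M := by
          rw [hM]
          exact le_iSup₂ (f := fun (α : Module.Dual K H) (_ : α ∈ J.roots H) => decIdeal J H (connectedRoots J H α)) _ hρr
        exact h2 (h1 hmem)
      · rw [rootSpace_eq_bot J H h0 hρr] at hmem
        rw [(Submodule.mem_bot K).mp hmem]
        exact Submodule.zero_mem _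
  have key2 : ∀ γ : Module.Dual K H, ∀ u ∈ J.rootSpace H γ, ∀ v : L, J.br u v ∈ M := by
    intro γ u hu v
    have hv : v ∈ ⨆ γ' : Module.Dual K H, J.rootSpace H γ' := by
      rw [hs.decomp]; exact Submodule.mem_top
    have hle : (⨆ γ' : Module.Dual K H, J.rootSpace H γ') ≤
        Submodule.comap (J.br u) M :=
      iSup_le fun γ' => fun w hw => key γ γ' u hu w hw
    exact hle hv
  have key3 : ∀ u v : L, J.br u v ∈ M := by
    intro u v
    have hu : u ∈ ⨆ γ : Module.Dual K H, J.rootSpace H γ := by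
      rw [hs.decomp]; exact Submodule.mem_top
    have hle : (⨆ γ : Module.Dual K H, J.rootSpace H γ) ≤
        Submodule.comap (J.br.flip v) M :=
      iSup_le fun γ => fun w hw => key2 γ w hw v
    exact hle hu
  constructor
  · rw [← top_le_iff, ← hLL]
    refine Submodule.span_le.mpr ?_
    rintro z ⟨x, y, rfl⟩
    exact key3 x y
  · intro α hα
    rw [eq_bot_iff]
    intro x hx
    set N := ⨆ β ∈ J.roots H, ⨆ _ : ¬ Connected J H α β,
      decIdeal J H (connectedRoots J H β) with hN
    have hxI : x ∈ decIdeal J H (connectedRoots J H α) := hx.1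
    have hxN : x ∈ N := hx.2
    -- step 1: x ∈ H
    have hxH : x ∈ H := by
      set V : Module.Dual K H → Submodule K L := J.rootSpace H with hV
      set s : Set (Module.Dual K H) := insert 0 (connectedRoots J H α) with hsdef
      set t : Set (Module.Dual K H) :=
        insert 0 {γ | γ ∈ J.roots H ∧ ¬ Connected J H α γ} with htdef
      have hIs : decIdeal J H (connectedRoots J H α) ≤ ⨆ γ ∈ s, V γ := by
        refine sup_le ?_ ?_
        · refine le_trans (rootSpan_le_H J H hs _) ?_
          refine le_trans (le_of_eq hs.zero_rootSpace.symm) ?_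
          exact le_biSup _ (Set.mem_insert 0 _)
        · refine iSup₂_le fun γ hγ => ?_
          exact le_iSup₂ (f := fun (γ : Module.Dual K H) (_ : γ ∈ s) => V γ) γ (Set.mem_insert_of_mem _ hγ)
      have hNt : N ≤ ⨆ γ ∈ t, V γ := by
        rw [hN]
        refine iSup₂_le fun β hβ => iSup_le fun hnc => sup_le ?_ ?_
        · refine le_trans (rootSpan_le_H J H hs _) ?_
          refine le_trans (le_of_eq hs.zero_rootSpace.symm) ?_
          exact le_iSup₂ (f := fun (γ : Module.Dual K H) (_ : γ ∈ t) => V γ) 0 (Set.mem_insert 0 _)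
        · refine iSup₂_le fun γ hγ => ?_
          obtain ⟨hγr, hβγ⟩ := hγ
          refine le_iSup₂ (f := fun (γ : Module.Dual K H) (_ : γ ∈ t) => V γ) γ (Set.mem_insert_of_mem _ ⟨hγr, ?_⟩)
          intro hαγ
          exact hnc (connected_trans J H hsym hαγ (connected_symm J H hsym hγr hβγ))
      have hint : x ∈ ⨆ γ ∈ s ∩ t, V γ :=
        biSup_inf_biSup_le hs.indep s t (Submodule.mem_inf.mpr ⟨hIs hxI, hNt hxN⟩)
      have hsub : (⨆ γ ∈ s ∩ t, V γ) ≤ H := by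
        refine iSup₂_le fun γ hγ => ?_
        have hγ0 : γ = 0 := by
          rcases hγ.1 with h | h
          · exact h
          · rcases hγ.2 with h' | h'
            · exact h'
            · exact absurd h.2 h'.2.elim
        subst hγ0
        exact le_of_eq hs.zero_rootSpace
      exact hsub hint
    -- step 2: x brackets to zero with every root space
    have hbr : ∀ γ : Module.Dual K H, ∀ v ∈ J.rootSpace H γ, J.br x v = 0 := by
      intro γ v hv
      by_cases hγ0 : γ = 0
      · subst hγ0
        rw [hs.zero_rootSpace] at hv
        exact hs.abelian x hxH v hv
      · by_cases hγr : γ ∈ J.roots H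
        · by_cases hconn : Connected J H α γ
          · -- use x ∈ N
            have hker : N ≤ LinearMap.ker (J.br.flip v) := by
              rw [hN]
              refine iSup₂_le fun β hβ => iSup_le fun hnc => sup_le ?_ ?_
              · refine Submodule.span_le.mpr ?_
                rintro z ⟨ε, ⟨hεr, hβε⟩, e, he, f', hf', rfl⟩
                refine LinearMap.mem_ker.mpr ?_
                show J.br (J.br e f') v = 0
                refine br_br_eq_zero J H hs hsym hεr hγr ?_ he hf' hv
                intro hεγ
                have hβγ : Connected J H β γ := connected_trans J H hsym hβε hεγ
                have hγβ : Connected J H γ β := connected_symm J H hsym hγr hβγ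
                exact hnc (connected_trans J H hsym hconn hγβ)
              · refine iSup₂_le fun γ' hγ' => ?_
                obtain ⟨hγ'r, hβγ'⟩ := hγ'
                intro u hu
                refine LinearMap.mem_ker.mpr ?_
                show J.br u v = 0
                refine br_eq_zero_of_not_connected J H hs hsym hγ'r hγr ?_ hu hv
                intro hγ'γ
                have hβγ : Connected J H β γ := connected_trans J H hsym hβγ' hγ'γ
                have hγβ : Connected J H γ β := connected_symm J H hsym hγr hβγ
                exact hnc (connected_trans J H hsym hconn hγβ)
            have := hker hxN
            simpa using this
          · -- use x ∈ I_α
            have hker : decIdeal J H (connectedRoots J H α) ≤ LinearMap.ker (J.br.flip v) := by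
              refine sup_le ?_ ?_
              · refine Submodule.span_le.mpr ?_
                rintro z ⟨ε, ⟨hεr, hαε⟩, e, he, f', hf', rfl⟩
                refine LinearMap.mem_ker.mpr ?_
                show J.br (J.br e f') v = 0
                refine br_br_eq_zero J H hs hsym hεr hγr ?_ he hf' hv
                intro hεγ
                exact hconn (connected_trans J H hsym hαε hεγ)
              · refine iSup₂_le fun γ' hγ' => ?_
                obtain ⟨hγ'r, hαγ'⟩ := hγ'
                intro u hu
                refine LinearMap.mem_ker.mpr ?_
                show J.br u v = 0
                refine br_eq_zero_of_not_connected J H hs hsym hγ'r hγr ?_ hu hv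
                intro hγ'γ
                exact hconn (connected_trans J H hsym hαγ' hγ'γ)
            have := hker hxI
            simpa using this
        · have : v = 0 := by
            have := rootSpace_eq_bot J H hγ0 hγr ▸ hv
            simpa using this
          rw [this, map_zero]
    have hzero : ∀ w : L, J.br x w = 0 := by
      intro w
      have hw : w ∈ ⨆ γ : Module.Dual K H, J.rootSpace H γ := by
        rw [hs.decomp]; exact Submodule.mem_top
      have hle : (⨆ γ : Module.Dual K H, J.rootSpace H γ) ≤ LinearMap.ker (J.br x) :=
        iSup_le fun γ => fun v hv => LinearMap.mem_ker.mpr (hbr γ v hv)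
      exact hle hw
    exact (Submodule.mem_bot K).mpr (hZ x hzero)
end
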